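/- (Unbiasedness of the two-point Gaussian gradient estimator.) Let d : ℕ, L ≥ 0 and μ ≠ 0, and let f : EuclideanSpace ℝ (Fin d) → ℝ have L-Lipschitz gradient. Then for every x, ∫ ((f(x + μ • u) − f(x))/μ) • u ∂γ_d(u) = ∫ ∇f(x + μ • u) ∂γ_d(u); that is, the expectation of the two-point zeroth-order gradient estimator at x equals the gradient of the μ-smooth approximation f_μ at x. -/

import Mathlib

open MeasureTheory RealInnerProductSpace

/-- The standard Gaussian measure on `EuclideanSpace ℝ (Fin d)`, i.e. the product of `d`
copies of the real standard Gaussian measure. -/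
noncomputable def stdGaussian (d : ℕ) : Measure (EuclideanSpace ℝ (Fin d)) :=
  (Measure.pi (fun _ : Fin d => ProbabilityTheory.gaussianReal 0 1)).map
    (MeasurableEquiv.toLp 2 (Fin d → ℝ))

section Aux
open ProbabilityTheory Real
open scoped NNReal ENNReal

noncomputable def phi (t : ℝ) : ℝ := gaussianPDFReal 0 1 t

lemma phi_eq (t : ℝ) : phi t = (Real.sqrt (2*π))⁻¹ * Real.exp (-(t^2)/2) := by
  simp only [phi, gaussianPDFReal]
  norm_num

lemma phi_nonneg (t : ℝ) : 0 ≤ phi t := gaussianPDFReal_nonneg 0 1 t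

lemma phi_le (t : ℝ) : phi t ≤ Real.exp (-(t^2)/2) := by
  rw [phi_eq]
  have h1 : (1:ℝ) ≤ Real.sqrt (2*π) := by
    rw [show (1:ℝ) = Real.sqrt 1 by simp]
    apply Real.sqrt_le_sqrt
    nlinarith [Real.pi_gt_three]
  have := Real.exp_pos (-(t^2)/2)
  calc (Real.sqrt (2*π))⁻¹ * Real.exp (-(t^2)/2) ≤ 1 * Real.exp (-(t^2)/2) := by
        apply mul_le_mul_of_nonneg_right _ this.le
        exact inv_le_one_of_one_le₀ h1
    _ = _ := one_mul _

lemma measurable_phi : Measurable phi := measurable_gaussianPDFReal 0 1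

lemma gauss_eq_withDensity :
    gaussianReal 0 1 = volume.withDensity (fun t => ((phi t).toNNReal : ℝ≥0∞)) := by
  rw [gaussianReal_of_var_ne_zero 0 one_ne_zero]
  rfl

lemma gauss_integral_eq {X : Type*} [NormedAddCommGroup X] [NormedSpace ℝ X] (g : ℝ → X) :
    ∫ t, g t ∂(gaussianReal 0 1) = ∫ t, phi t • g t := by
  rw [gauss_eq_withDensity,
    integral_withDensity_eq_integral_smul (measurable_phi.real_toNNReal) g]
  congr 1
  funext t
  rw [NNReal.smul_def, Real.coe_toNNReal _ (phi_nonneg t)]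

lemma gauss_integrable_iff {X : Type*} [NormedAddCommGroup X] [NormedSpace ℝ X] (g : ℝ → X) :
    Integrable g (gaussianReal 0 1) ↔ Integrable (fun t => phi t • g t) volume := by
  have e : (fun t => phi t • g t) = fun t => (phi t).toNNReal • g t :=
    funext fun t => by rw [NNReal.smul_def, Real.coe_toNNReal _ (phi_nonneg t)]
  rw [gauss_eq_withDensity, e]
  exact (integrable_withDensity_iff_integrable_smul (measurable_phi.real_toNNReal) (g := g))

lemma continuous_phi : Continuous phi := by
  rw [show phi = fun t => (Real.sqrt (2*π))⁻¹ * Real.exp (-(t^2)/2) from funext phi_eq]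
  continuity

lemma integrable_abs_pow_gauss {b : ℝ} (hb : 0 < b) (n : ℕ) :
    Integrable (fun x : ℝ => |x|^n * Real.exp (-b * x^2)) := by
  have h := integrable_rpow_mul_exp_neg_mul_sq hb (s := (n:ℝ))
    (lt_of_lt_of_le (by norm_num) (Nat.cast_nonneg n))
  simp_rw [Real.rpow_natCast] at h
  refine h.abs.congr (Filter.Eventually.of_forall fun x => ?_)
  simp only [abs_mul, abs_pow, abs_of_nonneg (Real.exp_pos _).le]

lemma integrable_poly_gauss (n : ℕ) :
    Integrable (fun t : ℝ => (1+|t|)^n * Real.exp (-(t^2)/2)) := by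
  have e : (fun t : ℝ => (1+|t|)^n * Real.exp (-(t^2)/2))
      = fun t => ∑ k ∈ Finset.range (n+1),
          (n.choose k : ℝ) * (|t|^(n-k) * Real.exp (-(1/2) * t^2)) := by
    funext t
    rw [add_pow, Finset.sum_mul]
    refine Finset.sum_congr rfl fun k _ => ?_
    rw [show -(t^2)/2 = -(1/2) * t^2 by ring]
    ring
  rw [e]
  exact integrable_finset_sum _ fun k _ =>
    ((integrable_abs_pow_gauss (by norm_num : (0:ℝ) < 1/2) (n-k)).const_mul _)

lemma gauss_integrable {g : ℝ → ℝ} (hg : Continuous g) (c : ℝ) (n : ℕ)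
    (hb : ∀ t, |g t| ≤ c * (1+|t|)^n) : Integrable g (gaussianReal 0 1) := by
  have hc : 0 ≤ c := by
    have := (abs_nonneg (g 0)).trans (hb 0)
    simpa using this
  rw [gauss_integrable_iff]
  refine Integrable.mono' ((integrable_poly_gauss n).const_mul c)
    ((continuous_phi.smul hg).aestronglyMeasurable)
    (Filter.Eventually.of_forall fun t => ?_)
  have h1 : (0:ℝ) ≤ (1+|t|)^n := by positivity
  have h2 := Real.exp_pos (-(t^2)/2)
  calc ‖phi t • g t‖ = phi t * |g t| := by
        rw [smul_eq_mul, Real.norm_eq_abs, abs_mul, abs_of_nonneg (phi_nonneg t)]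
    _ ≤ Real.exp (-(t^2)/2) * (c * (1+|t|)^n) :=
        mul_le_mul (phi_le t) (hb t) (abs_nonneg _) h2.le
    _ = c * ((1+|t|)^n * Real.exp (-(t^2)/2)) := by ring

lemma hasDerivAt_phi (t : ℝ) : HasDerivAt phi (-t * phi t) t := by
  have h1 : HasDerivAt (fun t : ℝ => -(t^2)/2) (-t) t := by
    have := ((hasDerivAt_pow 2 t).neg).div_const 2
    refine this.congr_deriv ?_
    norm_num
    ring
  have h3 := (h1.exp).const_mul ((Real.sqrt (2*π))⁻¹)
  rw [show phi = fun t => (Real.sqrt (2*π))⁻¹ * Real.exp (-(t^2)/2) from funext phi_eq]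
  refine h3.congr_deriv ?_
  beta_reduce
  ring

lemma stein1d (h h' : ℝ → ℝ) (a : ℝ)
    (hder : ∀ t, HasDerivAt h (h' t) t) (hc : Continuous h')
    (hb : ∀ t, |h t| ≤ a * (1+|t|)^2) (hb' : ∀ t, |h' t| ≤ a * (1+|t|)^2) :
    ∫ t, t * h t ∂(gaussianReal 0 1) = ∫ t, h' t ∂(gaussianReal 0 1) := by
  have ha : 0 ≤ a := by have := (abs_nonneg (h 0)).trans (hb 0); simpa using this
  have hch : Continuous h := by
    rw [continuous_iff_continuousAt]; exact fun t => (hder t).continuousAt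
  have hb1 : ∀ t : ℝ, |t * h t| ≤ a * (1+|t|)^3 := by
    intro t
    have h0 := abs_nonneg t
    calc |t * h t| = |t| * |h t| := abs_mul _ _
      _ ≤ (1+|t|) * (a * (1+|t|)^2) := by
          apply mul_le_mul (by linarith) (hb t) (abs_nonneg _) (by linarith)
      _ = a * (1+|t|)^3 := by ring
  have Int1 : Integrable (fun t => t * h t) (gaussianReal 0 1) :=
    gauss_integrable (continuous_id.mul hch) a 3 hb1
  have Int2 : Integrable h' (gaussianReal 0 1) := gauss_integrable hc a 2 hb'
  have key : ∫ t, (t * h t - h' t) ∂(gaussianReal 0 1) = 0 := by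
    rw [gauss_integral_eq]
    -- Φ t = -(h t * phi t), Φ' t = (t * h t - h' t) * phi t
    have hΦder : ∀ t, HasDerivAt (fun s => -(h s * phi s)) (phi t • (t * h t - h' t)) t := by
      intro t
      have := ((hder t).mul (hasDerivAt_phi t)).neg
      refine this.congr_deriv ?_
      show _ = phi t * (t * h t - h' t)
      ring
    have hΦ'int : Integrable (fun t => phi t • (t * h t - h' t)) volume := by
      refine Integrable.mono' ((integrable_poly_gauss 3).const_mul (2*a))
        ((continuous_phi.smul ((continuous_id.mul hch).sub hc)).aestronglyMeasurable)
        (Filter.Eventually.of_forall fun t => ?_)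
      have h2 := Real.exp_pos (-(t^2)/2)
      have h0 := abs_nonneg t
      have e1 : |t * h t - h' t| ≤ 2 * a * (1+|t|)^3 := by
        calc |t * h t - h' t| ≤ |t * h t| + |h' t| := abs_sub _ _
          _ ≤ a * (1+|t|)^3 + a * (1+|t|)^2 := add_le_add (hb1 t) (hb' t)
          _ ≤ 2 * a * (1+|t|)^3 := by
              have hp : (1+|t|)^2 ≤ (1+|t|)^3 :=
                pow_le_pow_right₀ (by linarith [abs_nonneg t]) (by norm_num)
              nlinarith [abs_nonneg t]
      calc ‖phi t • (t * h t - h' t)‖ = phi t * |t * h t - h' t| := by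
            rw [smul_eq_mul, Real.norm_eq_abs, abs_mul, abs_of_nonneg (phi_nonneg t)]
        _ ≤ Real.exp (-(t^2)/2) * (2 * a * (1+|t|)^3) :=
            mul_le_mul (phi_le t) e1 (abs_nonneg _) h2.le
        _ = 2*a * ((1+|t|)^3 * Real.exp (-(t^2)/2)) := by ring
    have hΦint : Integrable (fun t => -(h t * phi t)) volume := by
      refine Integrable.mono' ((integrable_poly_gauss 2).const_mul a)
        ((hch.mul continuous_phi).neg.aestronglyMeasurable)
        (Filter.Eventually.of_forall fun t => ?_)
      have h2 := Real.exp_pos (-(t^2)/2)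
      calc ‖-(h t * phi t)‖ = |h t| * phi t := by
            rw [norm_neg, Real.norm_eq_abs, abs_mul, abs_of_nonneg (phi_nonneg t)]
        _ ≤ (a * (1+|t|)^2) * Real.exp (-(t^2)/2) :=
            mul_le_mul (hb t) (phi_le t) (phi_nonneg t) (by positivity)
        _ = a * ((1+|t|)^2 * Real.exp (-(t^2)/2)) := by ring
    exact integral_eq_zero_of_hasDerivAt_of_integrable hΦder hΦ'int hΦint
  rw [integral_sub Int1 Int2] at key
  linarith

instance (d : ℕ) : IsProbabilityMeasure (stdGaussian d) :=
  Measure.isProbabilityMeasure_map (MeasurableEquiv.toLp 2 (Fin d → ℝ)).measurable.aemeasurable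

lemma one_add_sum_le_prod {ι : Type*} (s : Finset ι) (a : ι → ℝ) (ha : ∀ i, 0 ≤ a i) :
    1 + ∑ i ∈ s, a i ≤ ∏ i ∈ s, (1 + a i) := by
  induction s using Finset.cons_induction with
  | empty => simp
  | cons j s hj ih =>
    rw [Finset.sum_cons, Finset.prod_cons]
    have h1 : 0 ≤ ∑ i ∈ s, a i := Finset.sum_nonneg fun i _ => ha i
    nlinarith [ha j, ih]

lemma norm_le_sum_abs {d : ℕ} (u : EuclideanSpace ℝ (Fin d)) : ‖u‖ ≤ ∑ i, |u i| := by
  have hrepr := (EuclideanSpace.basisFun (Fin d) ℝ).sum_repr u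
  calc ‖u‖ = ‖∑ i, ((EuclideanSpace.basisFun (Fin d) ℝ).repr u i) • (EuclideanSpace.basisFun (Fin d) ℝ) i‖ := by rw [hrepr]
    _ ≤ ∑ i, ‖((EuclideanSpace.basisFun (Fin d) ℝ).repr u i) • (EuclideanSpace.basisFun (Fin d) ℝ) i‖ := norm_sum_le _ _
    _ = ∑ i, |u i| := by
        refine Finset.sum_congr rfl fun i _ => ?_
        rw [norm_smul]
        simp [EuclideanSpace.basisFun_repr, EuclideanSpace.basisFun_apply]

lemma integrable_prod_gauss (d n : ℕ) :
    Integrable (fun u : Fin d → ℝ => ∏ i, (1+|u i|)^n)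
      (Measure.pi fun _ : Fin d => gaussianReal 0 1) := by
  induction d with
  | zero =>
      simp only [Finset.univ_eq_empty, Finset.prod_empty]
      exact integrable_const 1
  | succ m ih =>
      have mp := (measurePreserving_piFinSuccAbove (fun _ : Fin (m+1) => gaussianReal 0 1) 0).symm
      rw [← mp.integrable_comp_emb (MeasurableEquiv.measurableEmbedding _)]
      simp_rw [MeasurableEquiv.piFinSuccAbove_symm_apply, Fin.insertNthEquiv,
        Fin.prod_univ_succ, Fin.insertNth_zero]
      simp only [Fin.zero_succAbove, Function.comp_def, Fin.cons_zero, Fin.cons_succ,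
        Equiv.coe_fn_mk]
      have h1 : Integrable (fun t : ℝ => (1+|t|)^n) (gaussianReal 0 1) := by
        refine gauss_integrable (by continuity) 1 n (fun t => ?_)
        rw [one_mul, abs_of_nonneg (by positivity)]
      exact h1.mul_prod ih

lemma integrable_growth {d n : ℕ} {X : Type*} [NormedAddCommGroup X]
    {F : EuclideanSpace ℝ (Fin d) → X} (hF : Continuous F) (c : ℝ)
    (hb : ∀ u, ‖F u‖ ≤ c * (1+‖u‖)^n) : Integrable F (stdGaussian d) := by
  have hc : 0 ≤ c := by
    have h0 := (norm_nonneg (F 0)).trans (hb 0)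
    nlinarith [norm_nonneg (0 : EuclideanSpace ℝ (Fin d)), pow_pos
      (by linarith [norm_nonneg (0 : EuclideanSpace ℝ (Fin d))] : (0:ℝ) < 1 + ‖(0 : EuclideanSpace ℝ (Fin d))‖) n]
  rw [_root_.stdGaussian, (MeasurableEquiv.toLp 2 (Fin d → ℝ)).measurableEmbedding.integrable_map_iff]
  refine Integrable.mono' ((integrable_prod_gauss d n).const_mul c)
    (hF.comp (PiLp.continuous_toLp 2 _)).aestronglyMeasurable
    (Filter.Eventually.of_forall fun u => ?_)
  have hsum : ‖WithLp.toLp 2 u‖ ≤ ∑ i, |u i| := by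
    have := norm_le_sum_abs (WithLp.toLp 2 u)
    simpa only [PiLp.toLp_apply] using this
  have key : (1+‖WithLp.toLp 2 u‖)^n ≤ ∏ i, (1+|u i|)^n := by
    rw [Finset.prod_pow]
    refine pow_le_pow_left₀ (by linarith [norm_nonneg (WithLp.toLp 2 u)]) ?_ n
    exact le_trans (by linarith [hsum])
      (one_add_sum_le_prod Finset.univ (fun i => |u i|) (fun i => abs_nonneg _))
  calc ‖(F ∘ (MeasurableEquiv.toLp 2 (Fin d → ℝ))) u‖ ≤ c * (1+‖WithLp.toLp 2 u‖)^n := hb _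
    _ ≤ c * ∏ i, (1+|u i|)^n := by
        exact mul_le_mul_of_nonneg_left key hc

lemma abs_coord_le {d : ℕ} (u : EuclideanSpace ℝ (Fin d)) (i : Fin d) : |u i| ≤ ‖u‖ := by
  have h1 := EuclideanSpace.inner_single_right (𝕜 := ℝ) i (1:ℝ) u
  have h2 := abs_real_inner_le_norm u (EuclideanSpace.single i (1:ℝ))
  rw [h1] at h2
  simpa [EuclideanSpace.norm_single] using h2

noncomputable def ins {m : ℕ} (i : Fin (m+1)) (t : ℝ) (w : Fin m → ℝ) :
    EuclideanSpace ℝ (Fin (m+1)) := WithLp.toLp 2 (i.insertNth t w)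

set_option maxHeartbeats 2000000 in
lemma ins_line {m : ℕ} (i : Fin (m+1)) (t : ℝ) (w : Fin m → ℝ) :
    ins i t w = ins i 0 w + t • EuclideanSpace.single i (1:ℝ) := by
  unfold ins
  ext j
  rw [PiLp.add_apply, PiLp.smul_apply]
  refine Fin.succAboveCases i ?_ ?_ j
  · simp [ins, Fin.insertNth_apply_same, EuclideanSpace.single_apply]
  · intro k
    simp [ins, Fin.insertNth_apply_succAbove, EuclideanSpace.single_apply,
      Fin.succAbove_ne i k]

lemma ins_coord {m : ℕ} (i : Fin (m+1)) (t : ℝ) (w : Fin m → ℝ) :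
    ins i t w i = t := by simp [ins]

lemma quad_bound {d : ℕ} (g : EuclideanSpace ℝ (Fin d) → ℝ) (A B : ℝ) (hB : 0 ≤ B)
    (hdiff : Differentiable ℝ g)
    (hgb : ∀ u, ‖fderiv ℝ g u‖ ≤ A + B * ‖u‖) (u : EuclideanSpace ℝ (Fin d)) :
    |g u| ≤ (|g 0| + A + B) * (1+‖u‖)^2 := by
  have hA' : (0:ℝ) ≤ A := by simpa using le_trans (norm_nonneg _) (hgb 0)
  have bound : ∀ z ∈ Metric.closedBall (0 : EuclideanSpace ℝ (Fin d)) ‖u‖,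
      ‖fderiv ℝ g z‖ ≤ A + B * ‖u‖ := by
    intro z hz
    have hz' : ‖z‖ ≤ ‖u‖ := by simpa [dist_zero_right] using hz
    have := hgb z
    nlinarith
  have key := Convex.norm_image_sub_le_of_norm_fderiv_le
    (f := g) (s := Metric.closedBall (0 : EuclideanSpace ℝ (Fin d)) ‖u‖)
    (fun z _ => hdiff z) bound
    (convex_closedBall _ _)
    (Metric.mem_closedBall_self (norm_nonneg u))
    (by simp [Metric.mem_closedBall, dist_zero_right] : u ∈ _)
  rw [sub_zero] at key
  have habs : |g u - g 0| ≤ (A + B * ‖u‖) * ‖u‖ := by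
    simpa [Real.norm_eq_abs] using key
  have h1 := abs_sub_abs_le_abs_sub (g u) (g 0)
  have h2 := norm_nonneg u
  nlinarith [abs_nonneg (g 0), mul_nonneg hA' h2, mul_nonneg hB h2,
    mul_nonneg (mul_nonneg hB h2) h2, mul_nonneg (abs_nonneg (g 0)) h2, sq_nonneg ‖u‖,
    mul_nonneg (mul_nonneg hA' h2) h2, mul_nonneg (mul_nonneg (abs_nonneg (g 0)) h2) h2]

set_option maxHeartbeats 2000000 in
lemma coord_stein {d : ℕ} (g : EuclideanSpace ℝ (Fin d) → ℝ) (A B : ℝ) (hB : 0 ≤ B)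
    (hdiff : Differentiable ℝ g)
    (hcont : Continuous fun u => fderiv ℝ g u)
    (hgb : ∀ u, ‖fderiv ℝ g u‖ ≤ A + B * ‖u‖) (i : Fin d) :
    ∫ u, g u * u i ∂(stdGaussian d)
      = ∫ u, fderiv ℝ g u (EuclideanSpace.single i (1:ℝ)) ∂(stdGaussian d) := by
  have hA : (0:ℝ) ≤ A := by simpa using le_trans (norm_nonneg _) (hgb 0)
  have hgc : Continuous g := hdiff.continuous
  set C : ℝ := |g 0| + A + B with hC
  have hC0 : 0 ≤ C := by positivity
  have hq : ∀ u, |g u| ≤ C * (1+‖u‖)^2 := quad_bound g A B hB hdiff hgb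
  -- global integrability
  have IntF1 : Integrable (fun u => g u * u i) (stdGaussian d) := by
    refine integrable_growth (hgc.mul (EuclideanSpace.proj (𝕜 := ℝ) i).continuous) C
      (n := 3) (fun u => ?_)
    have h1 := hq u
    have h2 := abs_coord_le u i
    have h3 := norm_nonneg u
    calc ‖g u * u i‖ = |g u| * |u i| := abs_mul _ _
      _ ≤ (C * (1+‖u‖)^2) * ‖u‖ := by
          apply mul_le_mul h1 ((abs_coord_le u i)) (abs_nonneg _) (by positivity)
      _ ≤ C * (1+‖u‖)^3 := by nlinarith
  have IntF2 : Integrable (fun u => fderiv ℝ g u (EuclideanSpace.single i (1:ℝ)))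
      (stdGaussian d) := by
    refine integrable_growth
      ((ContinuousLinearMap.apply ℝ ℝ (EuclideanSpace.single i (1:ℝ))).continuous.comp hcont)
      (A + B) (n := 1) (fun u => ?_)
    have h1 := (fderiv ℝ g u).le_opNorm (EuclideanSpace.single i (1:ℝ))
    have h2 := hgb u
    have h3 := norm_nonneg u
    simp only [EuclideanSpace.norm_single, norm_one, mul_one] at h1
    calc ‖fderiv ℝ g u (EuclideanSpace.single i (1:ℝ))‖ ≤ ‖fderiv ℝ g u‖ := h1
      _ ≤ A + B * ‖u‖ := h2
      _ ≤ (A + B) * (1+‖u‖)^1 := by nlinarith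
  -- split off coordinate i
  obtain ⟨m, rfl⟩ : ∃ m, d = m + 1 :=
    ⟨d - 1, (Nat.succ_pred_eq_of_pos (Nat.pos_of_ne_zero fun h => (h ▸ i).elim0)).symm⟩
  set γ1 := ProbabilityTheory.gaussianReal (0:ℝ) 1 with hγ1
  have mp : MeasurePreserving ((MeasurableEquiv.toLp 2 (Fin (m+1) → ℝ)).symm.trans
        (MeasurableEquiv.piFinSuccAbove (fun _ : Fin (m+1) => ℝ) i))
      (stdGaussian (m+1)) (γ1.prod (Measure.pi fun _ : Fin m => γ1)) :=
    (measurePreserving_piFinSuccAbove (fun _ => γ1) i).comp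
      (MeasurePreserving.symm _ ⟨(MeasurableEquiv.toLp 2 (Fin (m+1) → ℝ)).measurable, rfl⟩)
  set e := (MeasurableEquiv.toLp 2 (Fin (m+1) → ℝ)).symm.trans
        (MeasurableEquiv.piFinSuccAbove (fun _ : Fin (m+1) => ℝ) i) with he
  have esymm : ∀ (t : ℝ) (w : Fin m → ℝ), e.symm (t, w) = ins i t w := by
    intro t w
    simp [he, ins, MeasurableEquiv.piFinSuccAbove_symm_apply, Fin.insertNthEquiv]
  -- transfer to product measure
  have T1 : ∫ u, g u * u i ∂(stdGaussian (m+1))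
      = ∫ p : ℝ × (Fin m → ℝ), (fun u : EuclideanSpace ℝ (Fin (m+1)) => g u * u i) (e.symm p)
          ∂(γ1.prod (Measure.pi fun _ : Fin m => γ1)) :=
    ((mp.symm e).integral_comp' _).symm
  have T2 : ∫ u, fderiv ℝ g u (EuclideanSpace.single i (1:ℝ)) ∂(stdGaussian (m+1))
      = ∫ p : ℝ × (Fin m → ℝ),
          (fun u : EuclideanSpace ℝ (Fin (m+1)) => fderiv ℝ g u (EuclideanSpace.single i (1:ℝ)))
            (e.symm p) ∂(γ1.prod (Measure.pi fun _ : Fin m => γ1)) :=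
    ((mp.symm e).integral_comp' _).symm
  have I1' : Integrable
      (fun p : ℝ × (Fin m → ℝ) =>
        (fun u : EuclideanSpace ℝ (Fin (m+1)) => g u * u i) (e.symm p))
      (γ1.prod (Measure.pi fun _ : Fin m => γ1)) :=
    ((mp.symm e).integrable_comp_emb e.symm.measurableEmbedding).mpr IntF1
  have I2' : Integrable
      (fun p : ℝ × (Fin m → ℝ) =>
        (fun u : EuclideanSpace ℝ (Fin (m+1)) =>
          fderiv ℝ g u (EuclideanSpace.single i (1:ℝ))) (e.symm p))
      (γ1.prod (Measure.pi fun _ : Fin m => γ1)) :=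
    ((mp.symm e).integrable_comp_emb e.symm.measurableEmbedding).mpr IntF2
  rw [T1, T2, MeasureTheory.integral_prod_symm _ I1', MeasureTheory.integral_prod_symm _ I2']
  refine integral_congr_ae (Filter.Eventually.of_forall fun w => ?_)
  -- inner 1-D Stein identity
  set V : EuclideanSpace ℝ (Fin (m+1)) := ins i 0 w with hV
  set S : EuclideanSpace ℝ (Fin (m+1)) := EuclideanSpace.single i (1:ℝ) with hS
  have hSnorm : ‖S‖ = 1 := by simp [hS, EuclideanSpace.norm_single]
  set a : ℝ := (C + A + B) * (1+‖V‖)^2 with ha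
  have hline : ∀ t : ℝ, HasDerivAt (fun t : ℝ => V + t • S) S t := by
    intro t
    simpa using ((hasDerivAt_id t).smul_const S).const_add V
  have hder : ∀ t : ℝ, HasDerivAt (fun t => g (V + t • S)) (fderiv ℝ g (V + t • S) S) t :=
    fun t => (hdiff (V + t • S)).hasFDerivAt.comp_hasDerivAt t (hline t)
  have hnorm : ∀ t : ℝ, ‖V + t • S‖ ≤ ‖V‖ + |t| := by
    intro t
    calc ‖V + t • S‖ ≤ ‖V‖ + ‖t • S‖ := norm_add_le _ _
      _ = ‖V‖ + |t| := by rw [norm_smul, hSnorm, mul_one, Real.norm_eq_abs]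
  have hVn := norm_nonneg V
  have hbh : ∀ t : ℝ, |g (V + t • S)| ≤ a * (1+|t|)^2 := by
    intro t
    have h2 := hnorm t
    have h3 := abs_nonneg t
    have hfac : (1 + ‖V + t • S‖) ≤ (1+‖V‖) * (1+|t|) := by nlinarith [mul_nonneg hVn h3]
    have h4 : (1 + ‖V + t • S‖)^2 ≤ ((1+‖V‖) * (1+|t|))^2 :=
      pow_le_pow_left₀ (by linarith [norm_nonneg (V + t • S)]) hfac 2
    calc |g (V + t • S)| ≤ C * (1 + ‖V + t • S‖)^2 := hq _
      _ ≤ C * ((1+‖V‖) * (1+|t|))^2 := mul_le_mul_of_nonneg_left h4 hC0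
      _ = (C * (1+‖V‖)^2) * (1+|t|)^2 := by ring
      _ ≤ a * (1+|t|)^2 := by
          apply mul_le_mul_of_nonneg_right _ (by positivity)
          rw [ha]
          nlinarith [sq_nonneg (1+‖V‖), hA, hB]
  have hbh' : ∀ t : ℝ, |fderiv ℝ g (V + t • S) S| ≤ a * (1+|t|)^2 := by
    intro t
    have h1 := (fderiv ℝ g (V + t • S)).le_opNorm S
    rw [hSnorm, mul_one] at h1
    have h2 := hnorm t
    have h3 := abs_nonneg t
    have hg0 := abs_nonneg (g 0)
    have e1 : A + B * (‖V‖ + |t|) ≤ (A+B) * ((1+‖V‖) * (1+|t|)) := by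
      nlinarith [mul_nonneg hA hVn, mul_nonneg hA h3, mul_nonneg (mul_nonneg hA hVn) h3,
        mul_nonneg hB hVn, mul_nonneg hB h3, mul_nonneg (mul_nonneg hB hVn) h3]
    have m1 : (A+B) * (1+‖V‖) ≤ (C+A+B) * (1+‖V‖)^2 := by
      rw [hC]
      nlinarith [mul_nonneg hA hVn, mul_nonneg hB hVn,
        mul_nonneg hA (mul_nonneg hVn hVn), mul_nonneg hB (mul_nonneg hVn hVn),
        mul_nonneg hg0 hVn, mul_nonneg hg0 (mul_nonneg hVn hVn)]
    have h1s : (1+|t|) ≤ (1+|t|)^2 := by nlinarith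
    have m2 : ((A+B) * (1+‖V‖)) * (1+|t|) ≤ ((C+A+B) * (1+‖V‖)^2) * (1+|t|)^2 :=
      mul_le_mul m1 h1s (by positivity) (by positivity)
    calc |fderiv ℝ g (V + t • S) S| ≤ ‖fderiv ℝ g (V + t • S)‖ := by
          rw [← Real.norm_eq_abs]; exact h1
      _ ≤ A + B * ‖V + t • S‖ := hgb _
      _ ≤ A + B * (‖V‖ + |t|) := by nlinarith
      _ ≤ (A+B) * ((1+‖V‖) * (1+|t|)) := e1
      _ ≤ a * (1+|t|)^2 := by rw [ha]; nlinarith [m2]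
  have hc' : Continuous fun t : ℝ => fderiv ℝ g (V + t • S) S := by
    have hl : Continuous fun t : ℝ => V + t • S := by continuity
    exact (ContinuousLinearMap.apply ℝ ℝ S).continuous.comp (hcont.comp hl)
  have hst := stein1d (fun t => g (V + t • S)) (fun t => fderiv ℝ g (V + t • S) S) a
    hder hc' hbh hbh'
  calc ∫ t, (fun u : EuclideanSpace ℝ (Fin (m+1)) => g u * u i) (e.symm (t, w)) ∂γ1
      = ∫ t, t * g (V + t • S) ∂γ1 := by
        refine integral_congr_ae (Filter.Eventually.of_forall fun t => ?_)
        have hcoord : ins i t w i = t := ins_coord i t w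
        rw [ins_line i t w] at hcoord
        simp only [esymm t w, ins_line i t w, ← hV, ← hS]
        rw [hcoord]
        ring
    _ = ∫ t, fderiv ℝ g (V + t • S) S ∂γ1 := hst
    _ = ∫ t, (fun u : EuclideanSpace ℝ (Fin (m+1)) =>
          fderiv ℝ g u (EuclideanSpace.single i (1:ℝ))) (e.symm (t, w)) ∂γ1 := by
        refine integral_congr_ae (Filter.Eventually.of_forall fun t => ?_)
        simp only [esymm t w, ins_line i t w, ← hV, ← hS]

lemma grad_coord {d : ℕ} (g : EuclideanSpace ℝ (Fin d) → ℝ) (u : EuclideanSpace ℝ (Fin d))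
    (i : Fin d) : gradient g u i = fderiv ℝ g u (EuclideanSpace.single i (1:ℝ)) := by
  show ((InnerProductSpace.toDual ℝ (EuclideanSpace ℝ (Fin d))).symm (fderiv ℝ g u)) i
    = fderiv ℝ g u (EuclideanSpace.single i (1:ℝ))
  have h := InnerProductSpace.toDual_symm_apply (𝕜 := ℝ) (E := EuclideanSpace ℝ (Fin d))
    (x := EuclideanSpace.single i (1:ℝ)) (y := fderiv ℝ g u)
  rw [real_inner_comm] at h
  rw [← h, EuclideanSpace.inner_single_left]
  simp

lemma grad_norm {d : ℕ} (g : EuclideanSpace ℝ (Fin d) → ℝ) (u : EuclideanSpace ℝ (Fin d)) :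
    ‖gradient g u‖ = ‖fderiv ℝ g u‖ := by
  show ‖(InnerProductSpace.toDual ℝ (EuclideanSpace ℝ (Fin d))).symm (fderiv ℝ g u)‖ = _
  rw [LinearIsometryEquiv.norm_map]

set_option maxHeartbeats 1000000 in
lemma stein_multi {d : ℕ} (g : EuclideanSpace ℝ (Fin d) → ℝ) (A B : ℝ) (hB : 0 ≤ B)
    (hdiff : Differentiable ℝ g)
    (hcont : Continuous fun u => fderiv ℝ g u)
    (hgb : ∀ u, ‖fderiv ℝ g u‖ ≤ A + B * ‖u‖) :
    ∫ u, g u • u ∂(stdGaussian d) = ∫ u, gradient g u ∂(stdGaussian d) := by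
  have hA : (0:ℝ) ≤ A := by simpa using le_trans (norm_nonneg _) (hgb 0)
  have hq := quad_bound g A B hB hdiff hgb
  set C : ℝ := |g 0| + A + B with hC
  have hC0 : 0 ≤ C := by positivity
  have IntL : Integrable (fun u => g u • u) (stdGaussian d) := by
    refine integrable_growth (hdiff.continuous.smul continuous_id) C (n := 3) fun u => ?_
    rw [norm_smul, Real.norm_eq_abs]
    have h1 := hq u
    have h2 := norm_nonneg u
    nlinarith [abs_nonneg (g u), mul_le_mul_of_nonneg_right (hq u) (norm_nonneg u),
      mul_nonneg hC0 h2, sq_nonneg ‖u‖]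
  have hgradc : Continuous fun u => gradient g u :=
    ((InnerProductSpace.toDual ℝ (EuclideanSpace ℝ (Fin d))).symm.continuous).comp hcont
  have IntR : Integrable (fun u => gradient g u) (stdGaussian d) := by
    refine integrable_growth hgradc (A + B) (n := 1) fun u => ?_
    rw [grad_norm]
    have := hgb u
    have h2 := norm_nonneg u
    nlinarith
  ext i
  have h1 : (∫ u, g u • u ∂(stdGaussian d)) i = ∫ u, g u * u i ∂(stdGaussian d) := by
    have hcomm := (EuclideanSpace.proj (𝕜 := ℝ) i).integral_comp_comm IntL
    calc (∫ u, g u • u ∂(stdGaussian d)) i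
        = EuclideanSpace.proj (𝕜 := ℝ) i (∫ u, g u • u ∂(stdGaussian d)) := rfl
      _ = ∫ u, EuclideanSpace.proj (𝕜 := ℝ) i (g u • u) ∂(stdGaussian d) := hcomm.symm
      _ = ∫ u, g u * u i ∂(stdGaussian d) := by
          refine integral_congr_ae (Filter.Eventually.of_forall fun u => ?_)
          show (g u • u) i = g u * u i
          rw [PiLp.smul_apply, smul_eq_mul]
  have h2 : (∫ u, gradient g u ∂(stdGaussian d)) i
      = ∫ u, fderiv ℝ g u (EuclideanSpace.single i (1:ℝ)) ∂(stdGaussian d) := by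
    have hcomm := (EuclideanSpace.proj (𝕜 := ℝ) i).integral_comp_comm IntR
    calc (∫ u, gradient g u ∂(stdGaussian d)) i
        = EuclideanSpace.proj (𝕜 := ℝ) i (∫ u, gradient g u ∂(stdGaussian d)) := rfl
      _ = ∫ u, EuclideanSpace.proj (𝕜 := ℝ) i (gradient g u) ∂(stdGaussian d) := hcomm.symm
      _ = ∫ u, fderiv ℝ g u (EuclideanSpace.single i (1:ℝ)) ∂(stdGaussian d) := by
          refine integral_congr_ae (Filter.Eventually.of_forall fun u => ?_)
          exact grad_coord g u i
  show (∫ u, g u • u ∂(stdGaussian d)) i = (∫ u, gradient g u ∂(stdGaussian d)) i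
  rw [h1, h2]
  exact coord_stein g A B hB hdiff hcont hgb i
end Aux

set_option maxHeartbeats 1000000 in
/-- **Unbiasedness of the two-point Gaussian gradient estimator.**
If `f` has `L`-Lipschitz gradient and `μ ≠ 0`, then the expectation of the two-point
zeroth-order gradient estimator at `x` equals the gradient of the μ-smooth approximation,
i.e. the Gaussian-averaged gradient. -/
theorem two_point_estimator_unbiased
    (d : ℕ) (L μ : ℝ) (hL : 0 ≤ L) (hμ : μ ≠ 0)
    (f : EuclideanSpace ℝ (Fin d) → ℝ)
    (hdiff : Differentiable ℝ f)
    (hlip : ∀ x y, ‖gradient f x - gradient f y‖ ≤ L * ‖x - y‖) :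
    ∀ x : EuclideanSpace ℝ (Fin d),
      (∫ u : EuclideanSpace ℝ (Fin d), ((f (x + μ • u) - f x) / μ) • u ∂(stdGaussian d)) =
        ∫ u, gradient f (x + μ • u) ∂(stdGaussian d) := by
  intro x
  set g : EuclideanSpace ℝ (Fin d) → ℝ := fun u => (f (x + μ • u) - f x) / μ with hgdef
  have hfd : ∀ a, fderiv ℝ f a
      = InnerProductSpace.toDual ℝ (EuclideanSpace ℝ (Fin d)) (gradient f a) := by
    intro a
    show _ = InnerProductSpace.toDual ℝ (EuclideanSpace ℝ (Fin d))
      ((InnerProductSpace.toDual ℝ (EuclideanSpace ℝ (Fin d))).symm (fderiv ℝ f a))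
    rw [LinearIsometryEquiv.apply_symm_apply]
  have hflip : ∀ a b, ‖fderiv ℝ f a - fderiv ℝ f b‖ ≤ L * ‖a - b‖ := by
    intro a b
    rw [hfd a, hfd b, ← map_sub, LinearIsometryEquiv.norm_map]
    exact hlip a b
  -- derivative of g
  have hgd : ∀ u, HasFDerivAt g (fderiv ℝ f (x + μ • u)) u := by
    intro u
    have hline : HasFDerivAt (fun u : EuclideanSpace ℝ (Fin d) => x + μ • u)
        (μ • ContinuousLinearMap.id ℝ (EuclideanSpace ℝ (Fin d))) u :=
      ((hasFDerivAt_id u).const_smul μ).const_add x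
    have h1 := ((hdiff (x + μ • u)).hasFDerivAt.comp u hline).sub_const (f x)
    have h2 := h1.const_smul (μ⁻¹)
    have hfun : g = fun u => μ⁻¹ • (f (x + μ • u) - f x) := by
      funext v
      simp [hgdef, smul_eq_mul, div_eq_inv_mul]
    rw [hfun]
    refine h2.congr_fderiv ?_
    ext y
    simp only [ContinuousLinearMap.coe_smul', Pi.smul_apply, ContinuousLinearMap.coe_comp',
      Function.comp_apply, ContinuousLinearMap.coe_id', id_eq, smul_eq_mul,
      ContinuousLinearMap.map_smul]
    field_simp
  have hgdiff : Differentiable ℝ g := fun u => (hgd u).differentiableAt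
  have hgfderiv : ∀ u, fderiv ℝ g u = fderiv ℝ f (x + μ • u) := fun u => (hgd u).fderiv
  have hgrad : ∀ u, gradient g u = gradient f (x + μ • u) := by
    intro u
    show (InnerProductSpace.toDual ℝ (EuclideanSpace ℝ (Fin d))).symm (fderiv ℝ g u)
      = (InnerProductSpace.toDual ℝ (EuclideanSpace ℝ (Fin d))).symm (fderiv ℝ f (x + μ • u))
    rw [hgfderiv u]
  have hcont : Continuous fun u => fderiv ℝ g u := by
    rw [show (fun u => fderiv ℝ g u) = fun u => fderiv ℝ f (x + μ • u) from funext hgfderiv]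
    have hlipK : LipschitzWith ⟨L * |μ|, by positivity⟩
        (fun u : EuclideanSpace ℝ (Fin d) => fderiv ℝ f (x + μ • u)) := by
      apply LipschitzWith.of_dist_le_mul
      intro u v
      rw [dist_eq_norm, dist_eq_norm]
      have hd : (x + μ • u) - (x + μ • v) = μ • (u - v) := by
        rw [add_sub_add_left_eq_sub, ← smul_sub]
      calc ‖fderiv ℝ f (x + μ • u) - fderiv ℝ f (x + μ • v)‖
          ≤ L * ‖(x + μ • u) - (x + μ • v)‖ := hflip _ _
        _ = L * |μ| * ‖u - v‖ := by rw [hd, norm_smul, Real.norm_eq_abs]; ring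
        _ = _ := rfl
    exact hlipK.continuous
  have hgb : ∀ u, ‖fderiv ℝ g u‖ ≤ ‖gradient f x‖ + (L * |μ|) * ‖u‖ := by
    intro u
    rw [hgfderiv u, hfd, LinearIsometryEquiv.norm_map]
    have h1 := norm_sub_norm_le (gradient f (x + μ • u)) (gradient f x)
    have h2 := hlip (x + μ • u) x
    have h3 : ‖(x + μ • u) - x‖ = |μ| * ‖u‖ := by
      rw [add_sub_cancel_left, norm_smul, Real.norm_eq_abs]
    rw [h3] at h2
    nlinarith
  have main := stein_multi g (‖gradient f x‖) (L * |μ|) (by positivity) hgdiff hcont hgb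
  calc (∫ u : EuclideanSpace ℝ (Fin d), ((f (x + μ • u) - f x) / μ) • u ∂(stdGaussian d))
      = ∫ u, gradient g u ∂(stdGaussian d) := main
    _ = ∫ u, gradient f (x + μ • u) ∂(stdGaussian d) :=
        integral_congr_ae (Filter.Eventually.of_forall fun u => hgrad u)
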